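/- Let k ≥ 2 and c₀, c₁, …, c_k ∈ ℝ. The k×k matrix C with entries C_{ij} = δ_{ij} c_i + c₀ is positive definite if and only if either all c₀, …, c_k are nonnegative with at most one of them equal to zero, or there exists i ∈ {0,…,k} such that c_i < 0, c_j > 0 for all j ≠ i, and 1/c₀ + 1/c₁ + ⋯ + 1/c_k < 0. -/

import Mathlib

open Finset Matrix

private lemma aux_pair {n : ℕ} (c : Fin n → ℝ)
    (H : ∀ y : Fin n → ℝ, y ≠ 0 → ∑ j, y j = 0 → 0 < ∑ j, c j * y j ^ 2)
    {i j : Fin n} (hij : i ≠ j) : 0 < c i + c j := by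
  set y : Fin n → ℝ := Pi.single i 1 - Pi.single j 1 with hy
  have hyne : y ≠ 0 := by
    intro h
    have := congrFun h i
    simp [hy, Pi.single_eq_same, Pi.single_eq_of_ne hij] at this
  have hsum : ∑ l, y l = 0 := by
    simp [hy, Finset.sum_sub_distrib]
  have hval : ∑ l, c l * y l ^ 2 = c i + c j := by
    have : ∀ l, c l * y l ^ 2 = c l * (Pi.single i 1 : Fin n → ℝ) l + c l * (Pi.single j 1 : Fin n → ℝ) l := by
      intro l
      by_cases hli : l = i
      · subst hli
        simp [hy, Pi.single_eq_same, Pi.single_eq_of_ne hij]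
      · by_cases hlj : l = j
        · subst hlj
          simp [hy, Pi.single_eq_same, Pi.single_eq_of_ne (Ne.symm hij), Pi.single_eq_of_ne hli]
        · simp [hy, Pi.single_eq_of_ne hli, Pi.single_eq_of_ne hlj]
    rw [Finset.sum_congr rfl fun l _ => this l, Finset.sum_add_distrib]
    have h1 : ∑ l, c l * (Pi.single i 1 : Fin n → ℝ) l = c i := by
      rw [Finset.sum_eq_single i]
      · simp
      · intro b _ hb; simp [Pi.single_eq_of_ne hb]
      · simp
    have h2 : ∑ l, c l * (Pi.single j 1 : Fin n → ℝ) l = c j := by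
      rw [Finset.sum_eq_single j]
      · simp
      · intro b _ hb; simp [Pi.single_eq_of_ne hb]
      · simp
    rw [h1, h2]
  have := H y hyne hsum
  rwa [hval] at this

private lemma key {n : ℕ} (hn : 2 ≤ n) (c : Fin n → ℝ) :
    (∀ y : Fin n → ℝ, y ≠ 0 → ∑ j, y j = 0 → 0 < ∑ j, c j * y j ^ 2) ↔
      ((∀ i, 0 ≤ c i) ∧ ∀ i j, c i = 0 → c j = 0 → i = j) ∨
        ∃ i, c i < 0 ∧ (∀ j, j ≠ i → 0 < c j) ∧ ∑ j, (c j)⁻¹ < 0 := by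
  have hcard : 1 < Fintype.card (Fin n) := by simp; omega
  constructor
  · intro H
    by_cases hpos : ∀ i, 0 ≤ c i
    · left
      refine ⟨hpos, fun i j hi hj => ?_⟩
      by_contra hij
      have := aux_pair c H hij
      rw [hi, hj] at this; linarith
    · right
      push_neg at hpos
      obtain ⟨i, hi⟩ := hpos
      have hci : c i < 0 := hi
      have hjpos : ∀ j, j ≠ i → 0 < c j := by
        intro j hj
        have := aux_pair c H hj
        linarith
      refine ⟨i, hci, hjpos, ?_⟩
      set S := ∑ j ∈ univ.erase i, (c j)⁻¹ with hS
      obtain ⟨j₀, hj₀⟩ := Fintype.exists_ne_of_one_lt_card hcard i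
      have hne : (univ.erase i).Nonempty := ⟨j₀, mem_erase.2 ⟨hj₀, mem_univ _⟩⟩
      have hSpos : 0 < S :=
        Finset.sum_pos (fun j hj => inv_pos.2 (hjpos j (mem_erase.1 hj).1)) hne
      set y : Fin n → ℝ := fun j => if j = i then -S else (c j)⁻¹ with hy
      have hyne : y ≠ 0 := by
        intro h
        have := congrFun h j₀
        simp only [hy, if_neg hj₀, Pi.zero_apply] at this
        exact (hjpos j₀ hj₀).ne' (inv_eq_zero.1 this)
      have hy0 : ∑ j, y j = 0 := by
        rw [← Finset.add_sum_erase _ _ (mem_univ i)]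
        have : ∑ j ∈ univ.erase i, y j = S := by
          rw [hS]
          exact Finset.sum_congr rfl fun j hj => by
            simp [hy, (mem_erase.1 hj).1]
        rw [this]
        simp [hy]
      have hval : ∑ j, c j * y j ^ 2 = c i * S ^ 2 + S := by
        rw [← Finset.add_sum_erase _ _ (mem_univ i)]
        congr 1
        · simp [hy]
        · rw [hS]
          refine Finset.sum_congr rfl fun j hj => ?_
          have hji := (mem_erase.1 hj).1
          have hcj : c j ≠ 0 := (hjpos j hji).ne'
          simp only [hy, if_neg hji]
          field_simp
      have h1 := H y hyne hy0
      rw [hval] at h1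
      have htot : ∑ j, (c j)⁻¹ = (c i)⁻¹ + S := (Finset.add_sum_erase _ _ (mem_univ i)).symm
      rw [htot]
      have hinv : c i * (c i)⁻¹ = 1 := mul_inv_cancel₀ hci.ne
      have h2 : 0 < c i * S + 1 := by nlinarith [h1, hSpos]
      nlinarith [h2, hci, hinv]
  · rintro (⟨hnn, huniq⟩ | ⟨i, hci, hcj, hsum⟩) y hy hy0
    · by_contra hle
      push_neg at hle
      have hterm : ∀ j ∈ univ, (0:ℝ) ≤ c j * y j ^ 2 :=
        fun j _ => mul_nonneg (hnn j) (sq_nonneg _)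
      have hz : ∀ j ∈ univ, c j * y j ^ 2 = 0 :=
        (Finset.sum_eq_zero_iff_of_nonneg hterm).1
          (le_antisymm hle (Finset.sum_nonneg hterm))
      obtain ⟨i, hyi⟩ := Function.ne_iff.1 hy
      simp only [Pi.zero_apply] at hyi
      have hci : c i = 0 := by
        rcases mul_eq_zero.1 (hz i (mem_univ i)) with h | h
        · exact h
        · exact absurd (pow_eq_zero_iff two_ne_zero |>.1 h) hyi
      have hyz : ∀ j, j ≠ i → y j = 0 := by
        intro j hj
        have hcj : c j ≠ 0 := fun h => hj (huniq j i h hci)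
        rcases mul_eq_zero.1 (hz j (mem_univ j)) with h | h
        · exact absurd h hcj
        · exact pow_eq_zero_iff two_ne_zero |>.1 h
      have : ∑ j, y j = y i :=
        Finset.sum_eq_single i (fun j _ hj => hyz j hj) (by simp)
      rw [hy0] at this
      exact hyi this.symm
    · set s := univ.erase i with hs
      have hspos : ∀ j ∈ s, 0 < c j := fun j hj => hcj j (mem_erase.1 hj).1
      set T := ∑ j ∈ s, (c j)⁻¹ with hT
      obtain ⟨j₀, hj₀⟩ := Fintype.exists_ne_of_one_lt_card hcard i
      have hne : s.Nonempty := ⟨j₀, mem_erase.2 ⟨hj₀, mem_univ _⟩⟩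
      have hTpos : 0 < T :=
        Finset.sum_pos (fun j hj => inv_pos.2 (hspos j hj)) hne
      set Q := ∑ j ∈ s, c j * y j ^ 2 with hQ
      have hQ0 : 0 ≤ Q :=
        Finset.sum_nonneg fun j hj => mul_nonneg (hspos j hj).le (sq_nonneg _)
      have hcs : (∑ j ∈ s, y j) ^ 2 / T ≤ Q := by
        calc (∑ j ∈ s, y j) ^ 2 / T ≤ ∑ j ∈ s, y j ^ 2 / (c j)⁻¹ :=
              Finset.sq_sum_div_le_sum_sq_div s y (fun j hj => inv_pos.2 (hspos j hj))
          _ = Q := Finset.sum_congr rfl fun j hj => by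
              rw [div_eq_mul_inv, inv_inv, mul_comm]
      have hys : ∑ j ∈ s, y j = - y i := by
        have := Finset.add_sum_erase univ y (mem_univ i)
        rw [hy0] at this
        rw [hs]
        linarith
      have hyi2 : y i ^ 2 ≤ T * Q := by
        rw [hys, neg_sq] at hcs
        rw [mul_comm]
        exact (div_le_iff₀ hTpos).1 hcs
      have hQpos : 0 < Q := by
        rcases hQ0.lt_or_eq with h | h
        · exact h
        · exfalso
          have hz : ∀ j ∈ s, c j * y j ^ 2 = 0 :=
            (Finset.sum_eq_zero_iff_of_nonneg
              (fun j hj => mul_nonneg (hspos j hj).le (sq_nonneg _))).1 h.symm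
          have hyz : ∀ j ∈ s, y j = 0 := by
            intro j hj
            rcases mul_eq_zero.1 (hz j hj) with h' | h'
            · exact absurd h' (hspos j hj).ne'
            · exact pow_eq_zero_iff two_ne_zero |>.1 h'
          have hyi0 : y i = 0 := by
            have h2 : y i ^ 2 ≤ 0 := by rw [← h] at hyi2; simpa using hyi2
            exact pow_eq_zero_iff two_ne_zero |>.1 (le_antisymm h2 (sq_nonneg _))
          apply hy
          funext j
          by_cases hj : j = i
          · subst hj; exact hyi0
          · exact hyz j (mem_erase.2 ⟨hj, mem_univ _⟩)
      have htot : ∑ j, (c j)⁻¹ = (c i)⁻¹ + T := (Finset.add_sum_erase _ _ (mem_univ i)).symm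
      rw [htot] at hsum
      have hinv : c i * (c i)⁻¹ = 1 := mul_inv_cancel₀ hci.ne
      have h1T : 0 < 1 + c i * T := by nlinarith [hsum, hci, hinv]
      have hsplit : ∑ j, c j * y j ^ 2 = c i * y i ^ 2 + Q :=
        (Finset.add_sum_erase _ _ (mem_univ i)).symm
      rw [hsplit]
      nlinarith [mul_pos h1T hQpos, mul_nonneg (neg_nonneg.2 hci.le) (sub_nonneg.2 hyi2)]

theorem posDef_delta_plus_const_iff
    (k : ℕ) (hk : 2 ≤ k) (c : Fin (k + 1) → ℝ) :
    (Matrix.of fun i j : Fin k =>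
        (if i = j then c i.succ else 0) + c 0).PosDef ↔
      (((∀ i, 0 ≤ c i) ∧ ∀ i j, c i = 0 → c j = 0 → i = j) ∨
        ∃ i, c i < 0 ∧ (∀ j, j ≠ i → 0 < c j) ∧ ∑ j, (c j)⁻¹ < 0) := by
  set M : Matrix (Fin k) (Fin k) ℝ :=
    Matrix.of fun i j : Fin k => (if i = j then c i.succ else 0) + c 0 with hM
  have hherm : M.IsHermitian := by
    ext i j
    simp only [hM, Matrix.conjTranspose_apply, Matrix.of_apply, star_trivial]
    by_cases h : i = j
    · subst h; simp
    · simp [h, Ne.symm h]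
  have hquad : ∀ x : Fin k → ℝ,
      dotProduct x (M *ᵥ x) = ∑ i, c i.succ * x i ^ 2 + c 0 * (∑ i, x i) ^ 2 := by
    intro x
    have hmv : ∀ i, (M *ᵥ x) i = c i.succ * x i + c 0 * ∑ j, x j := by
      intro i
      simp only [Matrix.mulVec, dotProduct, hM, Matrix.of_apply, add_mul]
      rw [Finset.sum_add_distrib, ← Finset.mul_sum]
      congr 1
      rw [Finset.sum_eq_single i]
      · simp
      · intro b _ hb; simp [Ne.symm hb]
      · simp
    rw [dotProduct]
    simp_rw [hmv, mul_add]
    rw [Finset.sum_add_distrib]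
    congr 1
    · exact Finset.sum_congr rfl fun i _ => by ring
    · rw [← Finset.sum_mul]; ring
  rw [← key (by omega : 2 ≤ k + 1) c]
  rw [Matrix.posDef_iff_dotProduct_mulVec]
  constructor
  · rintro ⟨-, hpd⟩ y hy hy0
    set x : Fin k → ℝ := fun i => y i.succ with hx
    have hxne : x ≠ 0 := by
      intro h
      apply hy
      funext j
      refine Fin.cases ?_ ?_ j
      · have := Fin.sum_univ_succ y
        rw [hy0] at this
        have h2 : ∑ i : Fin k, y i.succ = 0 := by
          rw [show (fun i : Fin k => y i.succ) = x from rfl] at *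
          simp [h]
        simpa [h2] using this.symm
      · intro i
        simpa using congrFun h i
    have := hpd (x := x) hxne
    rw [star_trivial, hquad x] at this
    have hsx : ∑ i, x i = - y 0 := by
      have := Fin.sum_univ_succ y
      rw [hy0] at this
      simp only [hx]
      linarith
    rw [Fin.sum_univ_succ fun j => c j * y j ^ 2]
    have : 0 < ∑ i : Fin k, c i.succ * y i.succ ^ 2 + c 0 * y 0 ^ 2 := by
      rw [hsx, neg_sq] at this
      exact this
    linarith
  · intro H
    refine ⟨hherm, fun x hx => ?_⟩
    set y : Fin (k + 1) → ℝ := Fin.cons (-∑ i, x i) x with hy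
    have hyne : y ≠ 0 := by
      intro h
      apply hx
      funext i
      have := congrFun h i.succ
      simpa [hy] using this
    have hy0 : ∑ j, y j = 0 := by
      rw [Fin.sum_univ_succ]
      simp [hy]
    have h1 := H y hyne hy0
    rw [Fin.sum_univ_succ fun j => c j * y j ^ 2] at h1
    simp only [hy, Fin.cons_zero, Fin.cons_succ, neg_sq] at h1
    rw [star_trivial, hquad x]
    linarith
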